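/- For every natural number n with n ≡ 0 (mod 3) or n ≡ 1 (mod 3), the integer 1 + 3·2^(4+20n) is not a prime number. -/
import Mathlib

lemma div7 (k : ℕ) : 7 ∣ 1 + 3 * 2 ^ (4 + 60 * k) := by
  have he : (2:ℕ) ^ (4 + 60 * k) = 16 * 8 ^ (20 * k) := by
    rw [show 4 + 60 * k = 4 + 3 * (20 * k) by ring, pow_add, pow_mul]
    norm_num
  rw [he]
  have h8 : (8:ℕ) ^ (20 * k) ≡ 1 ^ (20 * k) [MOD 7] := Nat.ModEq.pow _ (by decide)
  have : (1 + 3 * (16 * 8 ^ (20 * k)) : ℕ) ≡ 1 + 3 * (16 * 1 ^ (20 * k)) [MOD 7] :=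
    Nat.ModEq.add_left _ (Nat.ModEq.mul_left _ (Nat.ModEq.mul_left _ h8))
  have h0 : (1 + 3 * (16 * 1 ^ (20 * k)) : ℕ) ≡ 0 [MOD 7] := by
    simp [Nat.ModEq]
  exact (Nat.modEq_zero_iff_dvd).mp (this.trans h0)

lemma div61 (k : ℕ) : 61 ∣ 1 + 3 * 2 ^ (24 + 60 * k) := by
  have he : (2:ℕ) ^ (24 + 60 * k) = 2 ^ 24 * (2 ^ 60) ^ k := by
    rw [pow_add, pow_mul]
  rw [he]
  have h2 : ((2:ℕ) ^ 60) ^ k ≡ 1 ^ k [MOD 61] := Nat.ModEq.pow _ (by norm_num [Nat.ModEq])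
  have : (1 + 3 * (2 ^ 24 * (2 ^ 60) ^ k) : ℕ) ≡ 1 + 3 * (2 ^ 24 * 1 ^ k) [MOD 61] :=
    Nat.ModEq.add_left _ (Nat.ModEq.mul_left _ (Nat.ModEq.mul_left _ h2))
  have h0 : (1 + 3 * (2 ^ 24 * 1 ^ k) : ℕ) ≡ 0 [MOD 61] := by
    norm_num [Nat.ModEq]
  exact (Nat.modEq_zero_iff_dvd).mp (this.trans h0)

theorem stmt8 (n : ℕ) (h : n % 3 = 0 ∨ n % 3 = 1) : ¬ Nat.Prime (1 + 3 * 2 ^ (4 + 20 * n)) := by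
  intro hp
  rcases h with h | h
  · obtain ⟨k, rfl⟩ : ∃ k, n = 3 * k := ⟨n / 3, by omega⟩
    have hd : 7 ∣ 1 + 3 * 2 ^ (4 + 20 * (3 * k)) := by
      have := div7 k
      rwa [show 4 + 60 * k = 4 + 20 * (3 * k) by ring] at this
    rcases (hp.eq_one_or_self_of_dvd 7 hd) with h7 | h7
    · norm_num at h7
    · have : (49:ℕ) ≤ 1 + 3 * 2 ^ (4 + 20 * (3 * k)) := by
        have : (2:ℕ) ^ 4 ≤ 2 ^ (4 + 20 * (3 * k)) :=
          Nat.pow_le_pow_right (by norm_num) (Nat.le_add_right _ _)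
        omega
      omega
  · obtain ⟨k, hk⟩ : ∃ k, n = 3 * k + 1 := ⟨n / 3, by omega⟩
    subst hk
    have hd : 61 ∣ 1 + 3 * 2 ^ (4 + 20 * (3 * k + 1)) := by
      have := div61 k
      rwa [show 24 + 60 * k = 4 + 20 * (3 * k + 1) by ring] at this
    rcases (hp.eq_one_or_self_of_dvd 61 hd) with h61 | h61
    · norm_num at h61
    · have : (2:ℕ) ^ 24 ≤ 2 ^ (4 + 20 * (3 * k + 1)) :=
        Nat.pow_le_pow_right (by norm_num) (by omega)
      omega
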